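/- If q2 < p13/(p13+p23), then ⋃_{p ∈ [0,1]} R2(p) = R2' ∪ R2'', where R2' := { (λ1, λ2) ∈ ℝ² : λ1 ≥ 0, λ2 ≥ 0, λ1/((1−q2)·p13) + λ2/(q2·p23) < 1, and λ1 < q1·(1−q2)·p13 } and R2'' := { (λ1, λ2) ∈ ℝ² : λ2 ≥ 0, λ1 + λ2 < q1·(1−q2)·p13 + q2·p23·(1−q1), and q1·(1−q2)·p13 ≤ λ1 < q1·(1−q2)·(p13 + (1−p13)·p12) }. -/

import Mathlib

set_option maxHeartbeats 1000000


/-- If `q2 < p13/(p13+p23)`, then `⋃_{p ∈ [0,1]} R2(p) = R2' ∪ R2''`,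
with `R2'` and `R2''` as in (the paper's) equations for the subregion `R2`. -/
theorem stmt_12 (q1 q2 p12 p13 p23 : ℝ)
    (hq1 : 0 < q1) (hq1' : q1 < 1) (hq2 : 0 < q2) (hq2' : q2 < 1)
    (hp12 : 0 < p12) (hp12' : p12 ≤ 1) (hp13 : 0 < p13) (hp13' : p13 < 1)
    (hp23 : 0 < p23) (hp23' : p23 ≤ 1) (hp : p13 < p23)
    (R2 : ℝ → Set (ℝ × ℝ))
    (hR2 : ∀ p, R2 p = {lam : ℝ × ℝ | 0 ≤ lam.1 ∧ 0 ≤ lam.2 ∧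
      lam.2 + ((1 - q2) * (1 - p13) * p12 * p + q2 * p23) * lam.1 /
        ((1 - q2) * (p13 + (1 - p13) * p12 * p)) < q2 * p23 ∧
      lam.1 < q1 * (1 - q2) * (p13 + (1 - p13) * p12 * p)})
    (hq : q2 < p13 / (p13 + p23)) :
    (⋃ p ∈ Set.Icc (0:ℝ) 1, R2 p) =
      {lam : ℝ × ℝ | 0 ≤ lam.1 ∧ 0 ≤ lam.2 ∧
        lam.1 / ((1 - q2) * p13) + lam.2 / (q2 * p23) < 1 ∧
        lam.1 < q1 * (1 - q2) * p13} ∪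
      {lam : ℝ × ℝ | 0 ≤ lam.2 ∧
        lam.1 + lam.2 < q1 * (1 - q2) * p13 + q2 * p23 * (1 - q1) ∧
        q1 * (1 - q2) * p13 ≤ lam.1 ∧
        lam.1 < q1 * (1 - q2) * (p13 + (1 - p13) * p12)} := by
  have ha : (0:ℝ) < 1 - q2 := by linarith
  have hq2p : q2 * p23 < (1 - q2) * p13 := by
    have h0 : (0:ℝ) < p13 + p23 := by linarith
    have := (lt_div_iff₀ h0).mp hq
    nlinarith
  have hq2p23 : (0:ℝ) < q2 * p23 := mul_pos hq2 hp23
  have hcpos : (0:ℝ) < (1 - p13) * p12 := mul_pos (by linarith) hp12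
  ext lam
  simp only [Set.mem_iUnion, Set.mem_union, Set.mem_setOf_eq, hR2, Set.mem_Icc]
  constructor
  · rintro ⟨p, ⟨hp0, hp1⟩, h1, h2, h3, h4⟩
    have hc0 : 0 ≤ (1 - p13) * p12 * p := mul_nonneg hcpos.le hp0
    have hD : 0 < (1 - q2) * (p13 + (1 - p13) * p12 * p) :=
      mul_pos ha (by linarith)
    have h3' : ((1 - q2) * (1 - p13) * p12 * p + q2 * p23) * lam.1 <
        (q2 * p23 - lam.2) * ((1 - q2) * (p13 + (1 - p13) * p12 * p)) := by
      have hx : ((1 - q2) * (1 - p13) * p12 * p + q2 * p23) * lam.1 /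
          ((1 - q2) * (p13 + (1 - p13) * p12 * p)) < q2 * p23 - lam.2 := by linarith
      exact (div_lt_iff₀ hD).mp hx
    by_cases hcase : lam.1 < q1 * (1 - q2) * p13
    · left
      refine ⟨h1, h2, ?_, hcase⟩
      rw [div_add_div _ _ (by positivity) (by positivity), div_lt_one (by positivity)]
      -- lam.1 * (q2*p23) + lam.2 * ((1-q2)*p13) < (1-q2)*p13 * (q2*p23)
      have key : q2 * p23 * lam.1 * ((1 - q2) * (p13 + (1 - p13) * p12 * p)) ≤
          ((1 - q2) * (1 - p13) * p12 * p + q2 * p23) * lam.1 * ((1 - q2) * p13) := by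
        nlinarith [mul_nonneg (mul_nonneg (mul_nonneg hc0 h1) ha.le)
          (by linarith : (0:ℝ) ≤ (1 - q2) * p13 - q2 * p23)]
      have key2 := mul_lt_mul_of_pos_right h3' (by positivity : (0:ℝ) < (1 - q2) * p13)
      have key3 : q2 * p23 * lam.1 * ((1 - q2) * (p13 + (1 - p13) * p12 * p)) <
          ((q2 * p23 - lam.2) * ((1 - q2) * p13)) *
            ((1 - q2) * (p13 + (1 - p13) * p12 * p)) := by linarith [key, key2]
      have key4 := lt_of_mul_lt_mul_right key3 hD.le
      linarith [key4]
    · right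
      push_neg at hcase
      refine ⟨h2, ?_, hcase, ?_⟩
      · -- lam.1 + lam.2 < q1*(1-q2)*p13 + q2*p23*(1-q1)
        have hKpos : (0:ℝ) < (1 - q2) * p13 - q2 * p23 := by linarith
        have h5 := mul_lt_mul_of_pos_left h4 hKpos
        nlinarith [h3', h5, hD, mul_pos hD hKpos]
      · nlinarith [h4, hp1, mul_pos (mul_pos hq1 ha) hcpos]
  · rintro (⟨h1, h2, h3, h4⟩ | ⟨h2, hsum, hge, hlt⟩)
    · refine ⟨0, ⟨le_refl 0, zero_le_one⟩, h1, h2, ?_, ?_⟩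
      · simp only [mul_zero, zero_add, add_zero]
        have hpos : (0:ℝ) < (1 - q2) * p13 := by positivity
        rw [div_add_div _ _ (ne_of_gt hpos) (ne_of_gt hq2p23), div_lt_one (by positivity)] at h3
        have hx : q2 * p23 * lam.1 / ((1 - q2) * p13) < q2 * p23 - lam.2 := by
          rw [div_lt_iff₀ hpos]; nlinarith [h3]
        linarith
      · simpa using h4
    · -- second region: construct p
      have hl1pos : 0 < lam.1 := lt_of_lt_of_le (by positivity) hge
      set T := q1 * (1 - q2) * (p13 + (1 - p13) * p12) with hT
      set S := lam.1 + lam.2 - q2 * p23 with hS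
      set B := lam.1 * (q1 * ((1 - q2) * p13 - q2 * p23) + q2 * p23 - lam.1 - lam.2) with hB
      have hBpos : 0 < B := by
        rw [hB]; apply mul_pos hl1pos; nlinarith [hsum]
      set δ := min ((T - lam.1)/2) (B/(|S|+1)) with hδdef
      have hδpos : 0 < δ := lt_min (by linarith) (by positivity)
      have hδ1 : δ ≤ (T - lam.1)/2 := min_le_left _ _
      have hδ2 : δ ≤ B/(|S|+1) := min_le_right _ _
      have hden : 0 < q1 * (1 - q2) * ((1 - p13) * p12) := mul_pos (mul_pos hq1 ha) hcpos
      set p := (lam.1 + δ - q1 * (1 - q2) * p13) / (q1 * (1 - q2) * ((1 - p13) * p12))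
        with hpdef
      have hq1ne : q1 ≠ 0 := ne_of_gt hq1
      have hane : (1 - q2) ≠ 0 := ne_of_gt ha
      have hcne : (1 - p13) ≠ 0 := by linarith
      have hp12ne : p12 ≠ 0 := ne_of_gt hp12
      have hp0 : 0 ≤ p := div_nonneg (by linarith) hden.le
      have hp1' : p ≤ 1 := by
        rw [hpdef, div_le_one hden]
        nlinarith [hδ1, hlt, hT]
      have hMpos : 0 < lam.1 + δ := by linarith
      have hDval : (1 - q2) * (p13 + (1 - p13) * p12 * p) = (lam.1 + δ)/q1 := by
        rw [hpdef]; field_simp; ring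
      have hNval : (1 - q2) * (1 - p13) * p12 * p =
          (lam.1 + δ - q1 * (1 - q2) * p13)/q1 := by
        rw [hpdef]; field_simp
      refine ⟨p, ⟨hp0, hp1'⟩, hl1pos.le, h2, ?_, ?_⟩
      · rw [hNval, hDval]
        have hδS : δ * S < B := by
          rcases le_or_gt S 0 with hS0 | hS0
          · nlinarith [hδpos]
          · have h7 : δ * S ≤ B/(|S|+1) * S := mul_le_mul_of_nonneg_right hδ2 hS0.le
            have h8 : B/(|S|+1) * S < B := by
              rw [abs_of_pos hS0, div_mul_eq_mul_div, div_lt_iff₀ (by linarith)]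
              nlinarith [hBpos, hS0]
            exact h7.trans_lt h8
        rw [hS, hB] at hδS
        have heq : ((lam.1 + δ - q1 * (1 - q2) * p13)/q1 + q2 * p23) * lam.1 /
            ((lam.1 + δ)/q1) =
            (lam.1 + δ - q1 * (1 - q2) * p13 + q1 * (q2 * p23)) * lam.1 / (lam.1 + δ) := by
          field_simp
        rw [heq]
        have h9 : (lam.1 + δ - q1 * (1 - q2) * p13 + q1 * (q2 * p23)) * lam.1 /
            (lam.1 + δ) < q2 * p23 - lam.2 := by
          rw [div_lt_iff₀ hMpos]
          nlinarith [hδS]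
        linarith
      · have hmul : q1 * ((1 - q2) * (p13 + (1 - p13) * p12 * p)) = lam.1 + δ := by
          rw [hDval]; field_simp
        nlinarith [hδpos, hmul]
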